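/- If B is a finite Blaschke product of degree n with zeros α_1,…,α_n in the open unit disk, then its derivative B' has exactly n-1 zeros (counted with multiplicity) in the open unit disk. -/

import Mathlib

open Polynomial Complex

private lemma myreflect_pow (f : ℂ[X]) (hf : f.natDegree ≤ 1) (m : ℕ) :
    reflect m (f ^ m) = (reflect 1 f) ^ m := by
  induction m with
  | zero => simp [reflect_one]
  | succ k ih =>
    rw [pow_succ, pow_succ, show (k + 1 : ℕ) = k + 1 from rfl, add_comm k 1, add_comm 1 k,
      reflect_mul _ _ ((natDegree_pow_le).trans (by nlinarith)) hf, ih]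


private lemma myreflect_X_sub_C' (a : ℂ) : reflect 1 (X - C a) = 1 - C a * X := by
  ext i
  rw [coeff_reflect]
  match i with
  | 0 => simp [coeff_one]
  | 1 => simp [coeff_one]
  | (k+2) =>
    rw [Polynomial.revAt_eq_self_of_lt (by omega)]
    simp [coeff_one, coeff_X, Nat.succ_ne_zero]

private lemma myreflect_one_sub' (a : ℂ) : reflect 1 (1 - C a * X) = X - C a := by
  ext i
  rw [coeff_reflect]
  match i with
  | 0 => simp [coeff_one]
  | 1 => simp [coeff_one]
  | (k+2) =>
    rw [Polynomial.revAt_eq_self_of_lt (by omega)]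
    simp [coeff_one, coeff_X]

private lemma natdeg_one_sub' (a : ℂ) : (1 - C a * X).natDegree ≤ 1 := by
  refine (natDegree_sub_le _ _).trans ?_
  have h := natDegree_C_mul_le a X
  simp only [natDegree_one, natDegree_X] at *
  omega

private lemma natdeg_factor' (a b : ℂ) : ((X - C a) * (1 - C b * X)).natDegree ≤ 2 := by
  refine natDegree_mul_le.trans ?_
  have h1 : (X - C a).natDegree ≤ 1 := le_of_eq (natDegree_X_sub_C a)
  have h2 := natdeg_one_sub' b
  omega

private lemma myreflect_sum' {ι : Type*} (s : Finset ι) (f : ι → ℂ[X]) (N : ℕ) :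
    reflect N (∑ i ∈ s, f i) = ∑ i ∈ s, reflect N (f i) := by
  classical
  induction s using Finset.induction_on with
  | empty => simp
  | @insert a s' hns ih => rw [Finset.sum_insert hns, Finset.sum_insert hns, reflect_add, ih]

private lemma myreflect_prod' {ι : Type*} [DecidableEq ι] (s : Finset ι) (f : ι → ℂ[X])
    (hf : ∀ i ∈ s, (f i).natDegree ≤ 2) :
    reflect (2 * s.card) (∏ i ∈ s, f i) = ∏ i ∈ s, reflect 2 (f i) := by
  induction s using Finset.induction_on with
  | empty => simp [reflect_one]
  | @insert a s' hns ih =>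
    rw [Finset.prod_insert hns, Finset.prod_insert hns, Finset.card_insert_of_notMem hns,
      show 2 * (s'.card + 1) = 2 + 2 * s'.card by ring,
      reflect_mul _ _ (hf a (by simp)) ((natDegree_prod_le _ _).trans (by
        calc ∑ i ∈ s', (f i).natDegree ≤ ∑ _i ∈ s', 2 :=
          Finset.sum_le_sum (fun i hi => hf i (by simp [hi]))
        _ = 2 * s'.card := by rw [Finset.sum_const, smul_eq_mul, mul_comm])),
      ih (fun i hi => hf i (by simp [hi]))]

private lemma reflect_relation (n : ℕ) (hn : 1 ≤ n) (c : ℂ) (α : Fin n → ℂ)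
    (hc : ‖c‖ = 1) (W : ℂ[X])
    (hsum : W = C c * ∑ j, C (1 - α j * (starRingEnd ℂ) (α j)) *
      ∏ k ∈ Finset.univ.erase j, ((X - C (α k)) * (1 - C ((starRingEnd ℂ) (α k)) * X))) :
    reflect (2 * n - 2) (W.map (starRingEnd ℂ)) = C (((starRingEnd ℂ) c) ^ 2) * W := by
  have hcc : (starRingEnd ℂ) c * c = 1 := by
    rw [mul_comm, Complex.mul_conj]
    norm_cast
    rw [Complex.normSq_eq_norm_sq, hc]; norm_num
  set S : ℂ[X] := ∑ j, C (1 - α j * (starRingEnd ℂ) (α j)) *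
      ∏ k ∈ Finset.univ.erase j, ((X - C (α k)) * (1 - C ((starRingEnd ℂ) (α k)) * X)) with hSdef
  have hmap : W.map (starRingEnd ℂ) = C ((starRingEnd ℂ) c) *
      ∑ j, C (1 - α j * (starRingEnd ℂ) (α j)) *
        ∏ k ∈ Finset.univ.erase j, ((X - C ((starRingEnd ℂ) (α k))) * (1 - C (α k) * X)) := by
    rw [hsum, hSdef]
    rw [Polynomial.map_mul, map_C, Polynomial.map_sum]
    congr 1
    refine Finset.sum_congr rfl fun j _ => ?_
    rw [Polynomial.map_mul, map_C, Polynomial.map_prod]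
    congr 1
    · congr 1
      rw [map_sub, map_one, map_mul, Complex.conj_conj, mul_comm]
    · refine Finset.prod_congr rfl fun k _ => ?_
      rw [Polynomial.map_mul, Polynomial.map_sub, Polynomial.map_sub, Polynomial.map_one,
        Polynomial.map_mul, map_X, map_C, map_C, Complex.conj_conj]
  have hcard : ∀ j : Fin n, (Finset.univ.erase j).card = n - 1 := fun j => by
    rw [Finset.card_erase_of_mem (Finset.mem_univ j), Finset.card_univ, Fintype.card_fin]
  have hNN : 2 * n - 2 = 2 * (n - 1) := by omega
  rw [hmap, hNN, reflect_C_mul, myreflect_sum']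
  have hterm : ∀ j : Fin n, reflect (2 * (n-1)) (C (1 - α j * (starRingEnd ℂ) (α j)) *
      ∏ k ∈ Finset.univ.erase j, ((X - C ((starRingEnd ℂ) (α k))) * (1 - C (α k) * X)))
      = C (1 - α j * (starRingEnd ℂ) (α j)) *
        ∏ k ∈ Finset.univ.erase j, ((X - C (α k)) * (1 - C ((starRingEnd ℂ) (α k)) * X)) := by
    intro j
    rw [reflect_C_mul, ← hcard j, myreflect_prod' _ _ (fun k _ => natdeg_factor' _ _)]
    congr 1
    refine Finset.prod_congr rfl fun k _ => ?_
    rw [show (2 : ℕ) = 1 + 1 from rfl,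
      reflect_mul _ _ (le_of_eq (natDegree_X_sub_C _)) (natdeg_one_sub' _),
      myreflect_X_sub_C', myreflect_one_sub', mul_comm]
  rw [Finset.sum_congr rfl fun j _ => hterm j]
  rw [hsum, ← hSdef, ← mul_assoc, ← map_mul]
  congr 2
  rw [pow_two, mul_assoc, hcc, mul_one]


private lemma polyDerivFinsetProd {ι : Type*} [DecidableEq ι] (s : Finset ι) (f : ι → ℂ[X]) :
    derivative (∏ i ∈ s, f i) = ∑ i ∈ s, (∏ k ∈ s.erase i, f k) * derivative (f i) := by
  induction s using Finset.induction_on with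
  | empty => simp
  | @insert a s' hns ih =>
    rw [Finset.prod_insert hns, derivative_mul, ih, Finset.sum_insert hns,
      Finset.erase_insert hns, Finset.mul_sum]
    have h2 : ∑ i ∈ s', (∏ k ∈ (insert a s').erase i, f k) * derivative (f i)
        = ∑ i ∈ s', f a * ((∏ k ∈ s'.erase i, f k) * derivative (f i)) := by
      refine Finset.sum_congr rfl fun i hi => ?_
      rw [Finset.erase_insert_of_ne (by rintro rfl; exact hns hi),
        Finset.prod_insert (fun h => hns (Finset.mem_of_mem_erase h)), mul_assoc]
    rw [h2, mul_comm (derivative (f a)), add_comm]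

private lemma wronskian_sum_formula (n : ℕ) (c : ℂ) (α : Fin n → ℂ) :
    derivative (C c * ∏ j, (X - C (α j))) * (∏ j, (1 - C ((starRingEnd ℂ) (α j)) * X))
      - (C c * ∏ j, (X - C (α j))) * derivative (∏ j, (1 - C ((starRingEnd ℂ) (α j)) * X))
    = C c * ∑ j, C (1 - α j * (starRingEnd ℂ) (α j)) *
        ∏ k ∈ Finset.univ.erase j, ((X - C (α k)) * (1 - C ((starRingEnd ℂ) (α k)) * X)) := by
  set P : Fin n → ℂ[X] := fun j => X - C (α j) with hP
  set Q : Fin n → ℂ[X] := fun j => 1 - C ((starRingEnd ℂ) (α j)) * X with hQ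
  have hdP : derivative (∏ j, P j) = ∑ j, ∏ k ∈ Finset.univ.erase j, P k := by
    rw [polyDerivFinsetProd]
    refine Finset.sum_congr rfl fun j _ => ?_
    rw [hP]; simp
  have hdQ : derivative (∏ j, Q j) = ∑ j, (∏ k ∈ Finset.univ.erase j, Q k) *
      (-C ((starRingEnd ℂ) (α j))) := by
    rw [polyDerivFinsetProd]
    refine Finset.sum_congr rfl fun j _ => ?_
    congr 1
    rw [hQ]
    simp
  rw [derivative_C_mul, hdP, hdQ]
  have hfac : ∀ SA SB PP QQ : ℂ[X], (C c * SA) * QQ - (C c * PP) * SB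
      = C c * (SA * QQ - PP * SB) := by intros; ring
  rw [hfac]
  congr 1
  rw [Finset.sum_mul, Finset.mul_sum, ← Finset.sum_sub_distrib]
  refine Finset.sum_congr rfl fun j _ => ?_
  have hPj : (∏ k, P k) = P j * ∏ k ∈ Finset.univ.erase j, P k :=
    (Finset.mul_prod_erase _ _ (Finset.mem_univ j)).symm
  have hQj : (∏ k, Q k) = Q j * ∏ k ∈ Finset.univ.erase j, Q k :=
    (Finset.mul_prod_erase _ _ (Finset.mem_univ j)).symm
  have hkey : Q j + C ((starRingEnd ℂ) (α j)) * P j = C (1 - α j * (starRingEnd ℂ) (α j)) := by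
    rw [hP, hQ, map_sub, map_one, map_mul]
    ring
  rw [Finset.prod_mul_distrib, hPj, hQj, ← hkey]
  ring


private lemma circle_eval_ne_zero (n : ℕ) (hn : 1 ≤ n) (c : ℂ) (α : Fin n → ℂ)
    (hc : ‖c‖ = 1) (hα : ∀ j, ‖α j‖ < 1) (z : ℂ) (hz : ‖z‖ = 1) :
    eval z (C c * ∑ j, C (1 - α j * (starRingEnd ℂ) (α j)) *
      ∏ k ∈ Finset.univ.erase j, ((X - C (α k)) * (1 - C ((starRingEnd ℂ) (α k)) * X))) ≠ 0 := by
  have hzz : z * (starRingEnd ℂ) z = 1 := by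
    rw [Complex.mul_conj]
    norm_cast
    rw [Complex.normSq_eq_norm_sq, hz]; norm_num
  have hfac : ∀ k : Fin n, (z - α k) * (1 - (starRingEnd ℂ) (α k) * z)
      = z * ((Complex.normSq (z - α k) : ℝ) : ℂ) := by
    intro k
    have h1 : 1 - (starRingEnd ℂ) (α k) * z = z * (starRingEnd ℂ) (z - α k) := by
      rw [map_sub, mul_sub, hzz]; ring
    rw [h1, show (z - α k) * (z * (starRingEnd ℂ) (z - α k))
        = z * ((z - α k) * (starRingEnd ℂ) (z - α k)) by ring, Complex.mul_conj]
  have hprod : ∀ j : Fin n, ∏ k ∈ Finset.univ.erase j, ((z - α k) * (1 - (starRingEnd ℂ) (α k) * z))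
      = z ^ (n - 1) * ((∏ k ∈ Finset.univ.erase j, Complex.normSq (z - α k) : ℝ) : ℂ) := by
    intro j
    rw [Finset.prod_congr rfl fun k _ => hfac k, Finset.prod_mul_distrib, Finset.prod_const,
      Finset.card_erase_of_mem (Finset.mem_univ j), Finset.card_univ, Fintype.card_fin]
    push_cast
    ring
  have hcoefr : ∀ j : Fin n, (1 - α j * (starRingEnd ℂ) (α j))
      = ((1 - Complex.normSq (α j) : ℝ) : ℂ) := by
    intro j
    rw [Complex.mul_conj]
    push_cast
    ring
  set S : ℝ := ∑ j, (1 - Complex.normSq (α j)) *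
      ∏ k ∈ Finset.univ.erase j, Complex.normSq (z - α k) with hS
  have heval : eval z (C c * ∑ j, C (1 - α j * (starRingEnd ℂ) (α j)) *
      ∏ k ∈ Finset.univ.erase j, ((X - C (α k)) * (1 - C ((starRingEnd ℂ) (α k)) * X)))
      = c * z ^ (n-1) * (S : ℂ) := by
    have e1 : eval z (C c * ∑ j, C (1 - α j * (starRingEnd ℂ) (α j)) *
        ∏ k ∈ Finset.univ.erase j, ((X - C (α k)) * (1 - C ((starRingEnd ℂ) (α k)) * X)))
        = c * ∑ j, ((1 - Complex.normSq (α j) : ℝ) : ℂ) *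
            (z ^ (n-1) * ((∏ k ∈ Finset.univ.erase j, Complex.normSq (z - α k) : ℝ) : ℂ)) := by
      simp only [eval_mul, eval_C, eval_finset_sum, eval_prod, eval_sub, eval_one, eval_X]
      congr 1
      refine Finset.sum_congr rfl fun j _ => ?_
      rw [hcoefr j, hprod j]
    rw [e1, hS]
    push_cast
    rw [Finset.mul_sum, Finset.mul_sum]
    refine Finset.sum_congr rfl fun j _ => ?_
    ring
  rw [heval]
  have hc0 : c ≠ 0 := by
    intro h; rw [h] at hc; simp at hc
  have hz0 : z ≠ 0 := by
    intro h; rw [h] at hz; simp at hz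
  have hSpos : 0 < S := by
    rw [hS]
    refine Finset.sum_pos (fun j _ => ?_) ⟨⟨0, hn⟩, Finset.mem_univ _⟩
    refine mul_pos ?_ (Finset.prod_pos fun k _ => ?_)
    · have h1 := hα j
      have h2 : 0 ≤ ‖α j‖ := norm_nonneg _
      rw [← Complex.sq_norm]
      nlinarith
    · rw [Complex.normSq_pos, sub_ne_zero]
      intro h
      have := hα k
      rw [← h, hz] at this
      linarith
  exact mul_ne_zero (mul_ne_zero hc0 (pow_ne_zero _ hz0)) (by exact_mod_cast hSpos.ne')

/-- If `B` is a finite Blaschke product of degree `n` with zeros `α 1, …, α n` in the open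
unit disk, then `B'` has exactly `n - 1` zeros counted with multiplicity in the open unit disk.
We express `B = c • p / q` with `p = ∏ (X - α j)`, `q = ∏ (1 - conj (α j) X)`; the zeros of
`B'` in the disk (where `q ≠ 0`) are precisely the zeros of the Wronskian `W = p'q - pq'`,
counted with multiplicity. -/
theorem blaschke_derivative_zeros_in_disk (n : ℕ) (hn : 1 ≤ n) (c : ℂ) (α : Fin n → ℂ)
    (hc : ‖c‖ = 1) (hα : ∀ j, ‖α j‖ < 1)
    (p q W : ℂ[X])
    (hp : p = C c * ∏ j, (X - C (α j)))
    (hq : q = ∏ j, (1 - C ((starRingEnd ℂ) (α j)) * X))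
    (hW : W = derivative p * q - p * derivative q) :
    Multiset.card (W.roots.filter fun z => ‖z‖ < 1) = n - 1 := by
  classical
  have hsum : W = C c * ∑ j, C (1 - α j * (starRingEnd ℂ) (α j)) *
      ∏ k ∈ Finset.univ.erase j, ((X - C (α k)) * (1 - C ((starRingEnd ℂ) (α k)) * X)) := by
    rw [hW, hp, hq]; exact wronskian_sum_formula n c α
  set N : ℕ := 2 * n - 2 with hN
  have hcircle : ∀ z : ℂ, ‖z‖ = 1 → eval z W ≠ 0 := fun z hz => by
    rw [hsum]; exact circle_eval_ne_zero n hn c α hc hα z hz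
  have hW0 : W ≠ 0 := fun h => hcircle 1 (by simp) (by rw [h, eval_zero])
  have hR := reflect_relation n hn c α hc W hsum
  have hc0 : c ≠ 0 := fun h => by rw [h] at hc; simp at hc
  have hcj0 : (starRingEnd ℂ) c ≠ 0 := fun h => hc0 (by simpa using congrArg (starRingEnd ℂ) h)
  have hcj2 : ((starRingEnd ℂ) c) ^ 2 ≠ 0 := pow_ne_zero _ hcj0
  -- degree bound
  have hndW : W.natDegree ≤ N := by
    rw [hsum]
    refine (natDegree_C_mul_le _ _).trans (natDegree_sum_le_of_forall_le _ _ fun j _ => ?_)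
    refine (natDegree_C_mul_le _ _).trans ((natDegree_prod_le _ _).trans ?_)
    refine le_trans (Finset.sum_le_sum fun k (_ : k ∈ Finset.univ.erase j) =>
      natdeg_factor' (α k) ((starRingEnd ℂ) (α k))) ?_
    rw [Finset.sum_const, smul_eq_mul, Finset.card_erase_of_mem (Finset.mem_univ j),
      Finset.card_univ, Fintype.card_fin]
    omega
  -- coefficient relation
  have hcoeffrel : ∀ k, k ≤ N → (starRingEnd ℂ) (W.coeff (N - k)) =
      ((starRingEnd ℂ) c) ^ 2 * W.coeff k := by
    intro k hk
    have h := congrArg (fun f => coeff f k) hR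
    simp only [coeff_C_mul, coeff_map, coeff_reflect] at h
    rwa [Polynomial.revAt_le hk] at h
  set r : ℕ := W.natTrailingDegree with hrdef
  have hr : rootMultiplicity 0 W = r := rootMultiplicity_eq_natTrailingDegree'
  have hrle : r ≤ W.natDegree := natTrailingDegree_le_natDegree W
  have hrN : r ≤ N := hrle.trans hndW
  have htc : W.coeff r ≠ 0 := by
    have : W.trailingCoeff ≠ 0 := trailingCoeff_nonzero_iff_nonzero.mpr hW0
    exact this
  have hcoeffNr : W.coeff (N - r) ≠ 0 := by
    intro h
    have h2 := hcoeffrel (N - r) (by omega)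
    rw [show N - (N - r) = r by omega, h, mul_zero] at h2
    have h3 := congrArg (starRingEnd ℂ) h2
    simpa using htc (by simpa using h3)
  have hdeg : W.natDegree = N - r := by
    refine le_antisymm (natDegree_le_iff_coeff_eq_zero.mpr fun K hK => ?_)
      (le_natDegree_of_ne_zero hcoeffNr)
    by_cases hKN : K ≤ N
    · have h2 := hcoeffrel K hKN
      have h3 : W.coeff (N - K) = 0 := coeff_eq_zero_of_lt_natTrailingDegree (by omega)
      rw [h3, map_zero] at h2
      exact (mul_eq_zero.mp h2.symm).resolve_left hcj2
    · exact coeff_eq_zero_of_natDegree_lt (by omega)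
  -- pairing of root multiplicities
  have hpairle : ∀ a : ℂ, a ≠ 0 →
      rootMultiplicity a W ≤ rootMultiplicity (((starRingEnd ℂ) a)⁻¹) W := by
    intro a ha
    set b : ℂ := (starRingEnd ℂ) a with hbdef
    have hb : b ≠ 0 := fun h => ha (by simpa [hbdef] using congrArg (starRingEnd ℂ) h)
    set m : ℕ := rootMultiplicity a W with hm
    obtain ⟨h, hh⟩ := pow_rootMultiplicity_dvd W a
    have hh0 : h ≠ 0 := fun h0 => hW0 (by rw [hh, h0, mul_zero])
    have hmW : W.natDegree = m + h.natDegree := by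
      rw [hh, natDegree_mul (pow_ne_zero _ (X_sub_C_ne_zero a)) hh0, natDegree_pow,
        natDegree_X_sub_C, mul_one]
    have hmN : m ≤ N := by omega
    have hmap : W.map (starRingEnd ℂ) = (X - C b) ^ m * h.map (starRingEnd ℂ) := by
      rw [hh, Polynomial.map_mul, Polynomial.map_pow, Polynomial.map_sub, map_X, map_C]
    have hreflect : reflect N (W.map (starRingEnd ℂ))
        = (1 - C b * X) ^ m * reflect (N - m) (h.map (starRingEnd ℂ)) := by
      rw [hmap, show N = m + (N - m) by omega,
        reflect_mul _ _ (by rw [natDegree_pow, natDegree_X_sub_C, mul_one])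
          (by rw [natDegree_map]; omega),
        myreflect_pow _ (le_of_eq (natDegree_X_sub_C b)) m, myreflect_X_sub_C',
        show m + (N - m) - m = N - m by omega]
    have hfac : (1 - C b * X) = (-C b) * (X - C b⁻¹) := by
      rw [neg_mul, mul_sub, ← C_mul, mul_inv_cancel₀ hb, C_1]
      ring
    have hdvd : (X - C b⁻¹) ^ m ∣ W := by
      have h1 : (X - C b⁻¹) ^ m ∣ C (((starRingEnd ℂ) c) ^ 2) * W := by
        rw [← hR, hreflect, hfac, mul_pow]
        exact ⟨(-C b) ^ m * reflect (N - m) (map (starRingEnd ℂ) h), by ring⟩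
      exact ((isUnit_C.mpr (isUnit_iff_ne_zero.mpr hcj2)).dvd_mul_left).mp h1
    exact (le_rootMultiplicity_iff hW0).mpr hdvd
  have hpair : ∀ a : ℂ, a ≠ 0 →
      rootMultiplicity a W = rootMultiplicity (((starRingEnd ℂ) a)⁻¹) W := by
    intro a ha
    refine le_antisymm (hpairle a ha) ?_
    have ha' : ((starRingEnd ℂ) a)⁻¹ ≠ 0 :=
      inv_ne_zero (fun h => ha (by simpa using congrArg (starRingEnd ℂ) h))
    have h2 := hpairle _ ha'
    rwa [map_inv₀, Complex.conj_conj, inv_inv] at h2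
  have hsplits : Multiset.card W.roots = W.natDegree :=
    splits_iff_card_roots.mp (IsAlgClosed.splits W)
  set M := W.roots with hM
  have hmemcirc : ∀ z ∈ M, ‖z‖ ≠ 1 := fun z hz habs =>
    hcircle z habs ((mem_roots hW0).mp hz)
  set φ : ℂ → ℂ := fun z => ((starRingEnd ℂ) z)⁻¹ with hφ
  have hφφ : ∀ z, φ (φ z) = z := fun z => by
    simp only [hφ, map_inv₀, Complex.conj_conj, inv_inv]
  have hφinj : Function.Injective φ := Function.LeftInverse.injective hφφ
  have habsφ : ∀ z, ‖φ z‖ = (‖z‖)⁻¹ := fun z => by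
    rw [hφ]; rw [norm_inv, Complex.norm_conj]
  have h2 : M.filter (fun z => 1 < ‖z‖)
      = (M.filter (fun z => ‖z‖ < 1 ∧ z ≠ 0)).map φ := by
    ext w
    have key : Multiset.count w ((M.filter (fun z => ‖z‖ < 1 ∧ z ≠ 0)).map φ)
        = Multiset.count (φ w) (M.filter (fun z => ‖z‖ < 1 ∧ z ≠ 0)) := by
      conv_lhs => rw [← hφφ w]
      exact Multiset.count_map_eq_count' φ _ hφinj (φ w)
    rw [key]
    by_cases hw : 1 < ‖w‖
    · have hw0 : w ≠ 0 := by intro h; rw [h] at hw; norm_num at hw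
      have hawpos : (0:ℝ) < ‖w‖ := by linarith
      have hφw0 : φ w ≠ 0 := by
        intro h
        have h3 := habsφ w
        rw [h] at h3
        simp only [norm_zero] at h3
        have : ‖w‖ * (‖w‖)⁻¹ = 1 := mul_inv_cancel₀ hawpos.ne'
        rw [← h3, mul_zero] at this
        norm_num at this
      have hφwlt : ‖φ w‖ < 1 := by
        rw [habsφ]
        have h4 : ‖w‖ * (‖w‖)⁻¹ = 1 := mul_inv_cancel₀ hawpos.ne'
        nlinarith [inv_nonneg.mpr hawpos.le]
      rw [Multiset.count_filter, Multiset.count_filter, if_pos hw, if_pos ⟨hφwlt, hφw0⟩,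
        hM, count_roots, count_roots]
      exact ((hpair (φ w) hφw0).trans (by rw [show ((starRingEnd ℂ) (φ w))⁻¹ = φ (φ w) from rfl,
        hφφ])).symm
    · have hnotpred : ¬(‖φ w‖ < 1 ∧ φ w ≠ 0) := by
        rintro ⟨h1, hne⟩
        apply hw
        have h3 : 0 < ‖φ w‖ := by
          rcases lt_or_eq_of_le (norm_nonneg (φ w)) with h | h
          · exact h
          · exact absurd (norm_eq_zero.mp h.symm) hne
        have h4 := habsφ w
        have h5 : ‖w‖ ≠ 0 := by
          intro h0
          rw [h0, inv_zero] at h4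
          linarith
        have h6 : 0 < ‖w‖ := lt_of_le_of_ne (norm_nonneg w) (Ne.symm h5)
        have h7 : ‖w‖ * (‖w‖)⁻¹ = 1 := mul_inv_cancel₀ h5
        rw [← h4] at h7
        nlinarith
      rw [Multiset.count_filter, Multiset.count_filter, if_neg hw, if_neg hnotpred]
  have e3 : Multiset.card (M.filter (fun z => ‖z‖ < 1)) +
      Multiset.card (M.filter (fun z => 1 < ‖z‖)) = W.natDegree := by
    have hno : M.filter (fun z => ¬ ‖z‖ < 1)
        = M.filter (fun z => 1 < ‖z‖) :=
      Multiset.filter_congr fun z hz =>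
        ⟨fun h => lt_of_le_of_ne (not_lt.mp h) (Ne.symm (hmemcirc z hz)),
         fun h => not_lt.mpr (le_of_lt h)⟩
    rw [← hno, ← Multiset.card_add,
      Multiset.filter_add_not (fun z => ‖z‖ < 1) M, ← hsplits, hM]
  have e1 : Multiset.card (M.filter (fun z => ‖z‖ < 1))
      = rootMultiplicity 0 W +
        Multiset.card (M.filter (fun z => ‖z‖ < 1 ∧ z ≠ 0)) := by
    have hcard := congrArg Multiset.card
      (Multiset.filter_add_not (fun z => z = (0:ℂ)) (M.filter (fun z => ‖z‖ < 1)))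
    rw [Multiset.card_add] at hcard
    rw [← hcard]
    congr 1
    · rw [Multiset.filter_filter]
      have heq : M.filter (fun z => z = 0 ∧ ‖z‖ < 1)
          = M.filter (fun z => (0:ℂ) = z) :=
        Multiset.filter_congr fun z _ =>
          ⟨fun h => h.1.symm, fun h => ⟨h.symm, by rw [← h]; simp⟩⟩
      rw [heq, ← Multiset.count_eq_card_filter_eq, hM, count_roots]
    · rw [Multiset.filter_filter]
      congr 1
      exact Multiset.filter_congr fun z _ => by tauto
  have e2 : Multiset.card (M.filter (fun z => 1 < ‖z‖))
      = Multiset.card (M.filter (fun z => ‖z‖ < 1 ∧ z ≠ 0)) := by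
    rw [h2, Multiset.card_map]
  rw [hr] at e1
  omega
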